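/- For nonnegative integer n₁ and integer k, the coefficient of u^{n₁} in the formal power series T(u)^{n₁+1} e^{ku}, where T(u) = u/(1−e^{−u}), equals the generalized binomial coefficient C(n₁+k, n₁) = (n₁+k)(n₁+k−1)⋯(k+1)/n₁!. -/

import Mathlib

open Finset PowerSeries

/-- Generalized binomial coefficient `C(n+k, n) = (n+k)(n+k-1)⋯(k+1)/n!` for `k : ℤ`. -/
noncomputable def genChoose (k : ℤ) (n : ℕ) : ℚ :=
  (∏ i ∈ Finset.range n, ((k : ℚ) + 1 + i)) / n.factorial

lemma genChoose_zero (k : ℤ) : genChoose k 0 = 1 := by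
  simp [genChoose]

lemma genChoose_neg_one (n : ℕ) : genChoose (-1) (n + 1) = 0 := by
  unfold genChoose
  rw [Finset.prod_eq_zero (Finset.mem_range.2 (Nat.succ_pos n)) (by norm_num), zero_div]

lemma genChoose_pascal (k : ℤ) (n : ℕ) :
    genChoose (k + 1) (n + 1) = genChoose k (n + 1) + genChoose (k + 1) n := by
  have h1 : (∏ i ∈ Finset.range (n + 1), (((k + 1 : ℤ) : ℚ) + 1 + i))
      = (∏ i ∈ Finset.range n, (((k + 1 : ℤ) : ℚ) + 1 + i)) * ((k : ℚ) + 2 + n) := by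
    rw [Finset.prod_range_succ]; congr 1; push_cast; ring
  have h2 : (∏ i ∈ Finset.range (n + 1), ((k : ℚ) + 1 + i))
      = (∏ i ∈ Finset.range n, (((k + 1 : ℤ) : ℚ) + 1 + i)) * ((k : ℚ) + 1) := by
    rw [Finset.prod_range_succ']
    congr 1
    · apply Finset.prod_congr rfl
      intro i _
      push_cast; ring
    · push_cast; ring
  have hfac : ((n + 1).factorial : ℚ) = (n + 1) * n.factorial := by
    push_cast [Nat.factorial_succ]; ring
  have hfn : (n.factorial : ℚ) ≠ 0 := by exact_mod_cast Nat.factorial_ne_zero n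
  have hfn1 : ((n : ℚ) + 1) ≠ 0 := by positivity
  unfold genChoose
  rw [h1, h2, hfac]
  field_simp
  ring

namespace Stmt9Aux

variable (T : PowerSeries ℚ)
  (hT : T * (1 - PowerSeries.rescale (-1 : ℚ) (PowerSeries.exp ℚ)) = PowerSeries.X)

local notation "W" => PowerSeries.rescale (-1 : ℚ) (PowerSeries.exp ℚ)

lemma deriv_W : (d⁄dX ℚ) W = -W := by
  ext n
  rw [PowerSeries.coeff_derivative]
  simp only [map_neg, PowerSeries.coeff_rescale, PowerSeries.coeff_exp]
  have h : ((n + 1).factorial : ℚ) = (n + 1) * n.factorial := by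
    push_cast [Nat.factorial_succ]; ring
  have hfn : (n.factorial : ℚ) ≠ 0 := by exact_mod_cast Nat.factorial_ne_zero n
  have hfn1 : ((n : ℚ) + 1) ≠ 0 := by positivity
  rw [h]
  simp only [Algebra.algebraMap_self, RingHom.id_apply]
  field_simp [pow_succ]
  ring

include hT in
lemma key_identity : PowerSeries.X * (d⁄dX ℚ) T + T ^ 2 * W = T := by
  have hD : (d⁄dX ℚ) T * (1 - W) + T * W = 1 := by
    have h1 := congrArg (d⁄dX ℚ) hT
    rw [PowerSeries.derivative_X, Derivation.leibniz, Derivation.map_sub,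
      Derivation.map_one_eq_zero, deriv_W] at h1
    simp only [smul_eq_mul] at h1
    linear_combination h1
  calc PowerSeries.X * (d⁄dX ℚ) T + T ^ 2 * W
      = (d⁄dX ℚ) T * (T * (1 - W)) + T ^ 2 * W := by rw [hT]; ring
    _ = ((d⁄dX ℚ) T * (1 - W) + T * W) * T := by ring
    _ = T := by rw [hD, one_mul]

include hT in
lemma anchor (n : ℕ) :
    PowerSeries.coeff (n + 1) (T ^ (n + 2) * W) = 0 := by
  have hid : T ^ (n + 2) * W = T ^ (n + 1) - PowerSeries.X * (T ^ n * (d⁄dX ℚ) T) := by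
    have h := key_identity T hT
    have h2 : T ^ 2 * W = T - PowerSeries.X * (d⁄dX ℚ) T := by linear_combination h
    calc T ^ (n + 2) * W = T ^ n * (T ^ 2 * W) := by ring
      _ = T ^ n * (T - PowerSeries.X * (d⁄dX ℚ) T) := by rw [h2]
      _ = T ^ (n + 1) - PowerSeries.X * (T ^ n * (d⁄dX ℚ) T) := by ring
  rw [hid, map_sub, PowerSeries.coeff_succ_X_mul]
  have hder : (d⁄dX ℚ) (T ^ (n + 1)) = (n + 1) • (T ^ n • (d⁄dX ℚ) T) := by
    simpa using Derivation.leibniz_pow (d⁄dX ℚ) T (n + 1)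
  have h3 : PowerSeries.coeff n ((d⁄dX ℚ) (T ^ (n + 1)))
      = PowerSeries.coeff (n + 1) (T ^ (n + 1)) * ((n : ℚ) + 1) := by
    rw [PowerSeries.coeff_derivative]
  have h4 : PowerSeries.coeff n ((d⁄dX ℚ) (T ^ (n + 1)))
      = ((n : ℚ) + 1) * PowerSeries.coeff n (T ^ n * (d⁄dX ℚ) T) := by
    rw [hder, smul_eq_mul, map_nsmul, nsmul_eq_mul]; push_cast; ring
  have hne : ((n : ℚ) + 1) ≠ 0 := by positivity
  have h5 : PowerSeries.coeff n (T ^ n * (d⁄dX ℚ) T)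
      = PowerSeries.coeff (n + 1) (T ^ (n + 1)) :=
    mul_left_cancel₀ hne ((h4.symm.trans h3).trans (mul_comm _ _))
  rw [h5]
  ring

include hT in
lemma constCoeff_T : PowerSeries.constantCoeff T = 1 := by
  have h := congrArg (PowerSeries.coeff 1) hT
  rw [PowerSeries.coeff_one_X, PowerSeries.coeff_mul,
    Finset.Nat.sum_antidiagonal_eq_sum_range_succ_mk] at h
  simp only [Finset.sum_range_succ, Finset.sum_range_zero, zero_add] at h
  have hW : PowerSeries.constantCoeff W = 1 := by
    rw [← PowerSeries.coeff_zero_eq_constantCoeff_apply, PowerSeries.coeff_rescale]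
    simp [PowerSeries.coeff_exp]
  norm_num at h
  rw [hW] at h
  simpa using h

include hT in
lemma recurrence (n : ℕ) (a : ℚ) :
    PowerSeries.coeff (n + 1)
        (T ^ (n + 2) * PowerSeries.rescale (a + 1) (PowerSeries.exp ℚ))
      = PowerSeries.coeff (n + 1) (T ^ (n + 2) * PowerSeries.rescale a (PowerSeries.exp ℚ))
        + PowerSeries.coeff n
            (T ^ (n + 1) * PowerSeries.rescale (a + 1) (PowerSeries.exp ℚ)) := by
  have hE : PowerSeries.rescale (a + 1) (PowerSeries.exp ℚ) * W
      = PowerSeries.rescale a (PowerSeries.exp ℚ) := by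
    rw [PowerSeries.exp_mul_exp_eq_exp_add]
    norm_num
  have hid : T ^ (n + 2) * PowerSeries.rescale (a + 1) (PowerSeries.exp ℚ)
      - T ^ (n + 2) * PowerSeries.rescale a (PowerSeries.exp ℚ)
      = PowerSeries.X * (T ^ (n + 1) * PowerSeries.rescale (a + 1) (PowerSeries.exp ℚ)) := by
    calc T ^ (n + 2) * PowerSeries.rescale (a + 1) (PowerSeries.exp ℚ)
        - T ^ (n + 2) * PowerSeries.rescale a (PowerSeries.exp ℚ)
        = T ^ (n + 1) * PowerSeries.rescale (a + 1) (PowerSeries.exp ℚ)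
            * (T * (1 - W)) := by rw [← hE]; ring
      _ = PowerSeries.X * (T ^ (n + 1) * PowerSeries.rescale (a + 1) (PowerSeries.exp ℚ))
          := by rw [hT]; ring
  have h := congrArg (PowerSeries.coeff (n + 1)) hid
  rw [map_sub, PowerSeries.coeff_succ_X_mul] at h
  linarith [h]

end Stmt9Aux

/-- Lemma 3.4 of the paper: the coefficient of `u^{n₁}` in `T(u)^{n₁+1} e^{ku}`,
where `T(u) = u/(1-e^{-u})`, equals the generalized binomial coefficient `C(n₁+k, n₁)`. -/
theorem stmt_9 (n₁ : ℕ) (k : ℤ) (T : PowerSeries ℚ)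
    (hT : T * (1 - PowerSeries.rescale (-1 : ℚ) (PowerSeries.exp ℚ)) = PowerSeries.X) :
    PowerSeries.coeff n₁ (T ^ (n₁ + 1) * PowerSeries.rescale (k : ℚ) (PowerSeries.exp ℚ)) =
      genChoose k n₁ := by
  induction n₁ generalizing k with
  | zero =>
    rw [genChoose_zero, PowerSeries.coeff_zero_eq_constantCoeff, map_mul]
    have h1 : PowerSeries.constantCoeff
        (PowerSeries.rescale (k : ℚ) (PowerSeries.exp ℚ)) = 1 := by
      rw [← PowerSeries.coeff_zero_eq_constantCoeff_apply, PowerSeries.coeff_rescale]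
      simp [PowerSeries.coeff_exp]
    rw [h1, pow_one, Stmt9Aux.constCoeff_T T hT, mul_one]
  | succ n ih =>
    suffices h : ∀ j : ℤ, PowerSeries.coeff (n + 1)
        (T ^ (n + 2) * PowerSeries.rescale ((j : ℚ) - 1) (PowerSeries.exp ℚ))
        = genChoose (j - 1) (n + 1) by
      have h2 := h (k + 1)
      have hc : ((k + 1 : ℤ) : ℚ) - 1 = (k : ℚ) := by push_cast; ring
      have hc2 : (k + 1 - 1 : ℤ) = k := by ring
      rw [hc, hc2] at h2
      exact h2
    intro j
    induction j using Int.induction_on with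
    | zero =>
      have hc : ((0 : ℤ) : ℚ) - 1 = (-1 : ℚ) := by norm_num
      have hc2 : ((0 : ℤ) - 1) = (-1 : ℤ) := by ring
      rw [hc, hc2, genChoose_neg_one]
      exact Stmt9Aux.anchor T hT n
    | succ i hi =>
      have hc : (((i : ℤ) + 1 : ℤ) : ℚ) - 1 = (((i : ℤ) : ℚ) - 1) + 1 := by push_cast; ring
      rw [hc, Stmt9Aux.recurrence T hT n (((i : ℤ) : ℚ) - 1), hi]
      have hc2 : (((i : ℤ) : ℚ) - 1) + 1 = (((i : ℤ)) : ℚ) := by ring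
      rw [hc2, ih i]
      have hp := genChoose_pascal ((i : ℤ) - 1) n
      have hc3 : ((i : ℤ) - 1) + 1 = (i : ℤ) := by ring
      rw [hc3] at hp
      have hc4 : ((i : ℤ) + 1 - 1) = (i : ℤ) := by ring
      rw [hc4]
      linarith [hp]
    | pred i hi =>
      have hrec := Stmt9Aux.recurrence T hT n ((((-(i : ℤ) - 1) : ℤ) : ℚ) - 1)
      have hc : (((-(i : ℤ) - 1) : ℤ) : ℚ) - 1 + 1 = ((-(i : ℤ) : ℤ) : ℚ) - 1 := by
        push_cast; ring
      rw [hc] at hrec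
      have hih := ih (-(i : ℤ) - 1)
      have hc2 : ((-(i : ℤ) - 1 : ℤ) : ℚ) = ((-(i : ℤ) : ℤ) : ℚ) - 1 := by push_cast; ring
      rw [hc2] at hih
      rw [hi, hih] at hrec
      have hp := genChoose_pascal (-(i : ℤ) - 1 - 1) n
      have hc3 : (-(i : ℤ) - 1 - 1) + 1 = -(i : ℤ) - 1 := by ring
      rw [hc3] at hp
      linarith [hrec, hp]
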